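/- Let G = SL₃(ℂ) and let H ⊆ G be the subgroup of all matrices of the form [[t,0,a],[0,1,b],[0,0,t⁻¹]] with t ∈ ℂˣ and a,b ∈ ℂ. Then N_G(N_G(H)) ≠ N_G(H); that is, the normalizer of H in G is not self-normalizing. -/

import Mathlib

open Matrix

namespace NormalizerCounterexample

abbrev SL3 := Matrix.SpecialLinearGroup (Fin 3) ℂ

noncomputable def HForm (t : ℂˣ) (a b : ℂ) : Matrix (Fin 3) (Fin 3) ℂ :=
  !![(t : ℂ), 0, a; 0, 1, b; 0, 0, (t : ℂ)⁻¹]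

lemma det_HForm (t : ℂˣ) (a b : ℂ) : (HForm t a b).det = 1 := by
  simp [HForm, Matrix.det_fin_three, Matrix.vecHead, Matrix.vecTail]

noncomputable def hEl (t : ℂˣ) (a b : ℂ) : SL3 := ⟨HForm t a b, det_HForm t a b⟩

variable (H : Subgroup SL3)
variable (hH : ∀ g : SL3, g ∈ H ↔ ∃ (t : ℂˣ) (a b : ℂ),
      (g : Matrix (Fin 3) (Fin 3) ℂ) = !![(t : ℂ), 0, a; 0, 1, b; 0, 0, (t : ℂ)⁻¹])

include hH

theorem memH_iff (g : SL3) :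
    g ∈ H ↔ ((g : Matrix (Fin 3) (Fin 3) ℂ) 0 1 = 0 ∧
      (g : Matrix (Fin 3) (Fin 3) ℂ) 1 0 = 0 ∧ (g : Matrix (Fin 3) (Fin 3) ℂ) 1 1 = 1 ∧
      (g : Matrix (Fin 3) (Fin 3) ℂ) 2 0 = 0 ∧ (g : Matrix (Fin 3) (Fin 3) ℂ) 2 1 = 0) := by
  constructor
  · rw [hH]
    rintro ⟨t, a, b, hg⟩
    rw [hg]
    norm_num [Matrix.vecHead, Matrix.vecTail, Matrix.cons_val_two]
  · rintro ⟨h01, h10, h11, h20, h21⟩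
    have hdet : (g : Matrix (Fin 3) (Fin 3) ℂ).det = 1 := g.2
    rw [Matrix.det_fin_three, h01, h10, h11, h20, h21] at hdet
    ring_nf at hdet
    have h00 : (g : Matrix (Fin 3) (Fin 3) ℂ) 0 0 ≠ 0 := by
      intro h; rw [h] at hdet; simp at hdet
    rw [hH]
    refine ⟨Units.mk0 _ h00, (g : Matrix (Fin 3) (Fin 3) ℂ) 0 2,
      (g : Matrix (Fin 3) (Fin 3) ℂ) 1 2, ?_⟩
    have h22 : (g : Matrix (Fin 3) (Fin 3) ℂ) 2 2 = ((g : Matrix (Fin 3) (Fin 3) ℂ) 0 0)⁻¹ := by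
      field_simp
      linear_combination hdet
    ext i j
    fin_cases i <;> fin_cases j <;>
      simp [Matrix.vecHead, Matrix.vecTail, h01, h10, h11, h20, h21, h22]

theorem conj_eq (g : SL3) (hg : g ∈ (Subgroup.normalizer (H : Set SL3))) (t : ℂˣ) (a b : ℂ) :
    ∃ (t' : ℂˣ) (a' b' : ℂ),
      (g : Matrix (Fin 3) (Fin 3) ℂ) * HForm t a b = HForm t' a' b' * g := by
  rw [Subgroup.mem_normalizer_iff] at hg
  have hmem : hEl t a b ∈ H := (hH _).2 ⟨t, a, b, rfl⟩
  have hconj : g * hEl t a b * g⁻¹ ∈ H := (hg _).1 hmem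
  obtain ⟨t', a', b', heq⟩ := (hH _).1 hconj
  refine ⟨t', a', b', ?_⟩
  have h2 : ((g * hEl t a b * g⁻¹ : SL3) : Matrix (Fin 3) (Fin 3) ℂ) * g
      = !![(t' : ℂ), 0, a'; 0, 1, b'; 0, 0, (t' : ℂ)⁻¹] * g := by rw [heq]
  calc (g : Matrix (Fin 3) (Fin 3) ℂ) * HForm t a b
      = ((g * hEl t a b : SL3) : Matrix (Fin 3) (Fin 3) ℂ) := rfl
    _ = ((g * hEl t a b * g⁻¹ * g : SL3) : Matrix (Fin 3) (Fin 3) ℂ) := by group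
    _ = ((g * hEl t a b * g⁻¹ : SL3) : Matrix (Fin 3) (Fin 3) ℂ) * g := rfl
    _ = HForm t' a' b' * g := h2

/-- Any element of the normalizer has zeros at positions (1,0), (2,0), (0,1), (2,1). -/
theorem norm_zeros (g : SL3) (hg : g ∈ (Subgroup.normalizer (H : Set SL3))) :
    (g : Matrix (Fin 3) (Fin 3) ℂ) 1 0 = 0 ∧ (g : Matrix (Fin 3) (Fin 3) ℂ) 2 0 = 0 ∧
    (g : Matrix (Fin 3) (Fin 3) ℂ) 0 1 = 0 ∧ (g : Matrix (Fin 3) (Fin 3) ℂ) 2 1 = 0 := by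
  obtain ⟨t2, a2, b2, E2⟩ := conj_eq H hH g hg (Units.mk0 2 two_ne_zero) 0 0
  obtain ⟨t3, a3, b3, E3⟩ := conj_eq H hH g hg 1 0 1
  obtain ⟨t4, a4, b4, E4⟩ := conj_eq H hH g hg 1 1 0
  set G : Matrix (Fin 3) (Fin 3) ℂ := (g : Matrix (Fin 3) (Fin 3) ℂ) with hG
  have e20 := congrFun (congrFun E2 2) 0
  have e21 := congrFun (congrFun E2 2) 1
  have e22 := congrFun (congrFun E2 2) 2
  have e10 := congrFun (congrFun E2 1) 0
  have e01 := congrFun (congrFun E2 0) 1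
  have f22 := congrFun (congrFun E3 2) 2
  have k22 := congrFun (congrFun E4 2) 2
  simp only [HForm, Matrix.mul_apply, Fin.sum_univ_three] at e20 e21 e22 e10 e01 f22 k22
  norm_num [Matrix.vecHead, Matrix.vecTail, Matrix.cons_val_two, Units.val_mk0] at e20 e21 e22 e10 e01 f22 k22
  have h21 : G 2 1 = 0 := by
    by_contra hne
    have hu : ((t2 : ℂ))⁻¹ = 1 := mul_right_cancel₀ hne (by rw [one_mul, ← e21])
    rw [hu] at e20 e22
    have h20 : G 2 0 = 0 := by linear_combination e20
    have h22 : G 2 2 = 0 := by linear_combination (-2:ℂ) * e22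
    exact hne (by linear_combination f22 - h22 + ((t3:ℂ))⁻¹ * h22)
  have h20 : G 2 0 = 0 := by
    by_contra hne
    have hu : ((t2 : ℂ))⁻¹ = 2 := mul_right_cancel₀ hne (by rw [← e20]; ring)
    rw [hu] at e22
    have h22 : G 2 2 = 0 := by linear_combination (-2/3 : ℂ) * e22
    exact hne (by linear_combination k22 - h22 + ((t4:ℂ))⁻¹ * h22)
  have hdet : G.det = 1 := g.2
  rw [Matrix.det_fin_three] at hdet
  have h22ne : G 2 2 ≠ 0 := by
    intro h0
    rw [h20, h21, h0] at hdet
    simp at hdet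
  have hu : ((t2 : ℂ))⁻¹ = 2⁻¹ := by
    have h' : ((t2:ℂ))⁻¹ * G 2 2 = 2⁻¹ * G 2 2 := by linear_combination -e22
    exact mul_right_cancel₀ h22ne h'
  have h10 : G 1 0 = 0 := by linear_combination e10 + b2 * h20
  have ht2 : (t2 : ℂ) = 2 := by
    have := congrArg (·⁻¹) hu
    simpa using this
  rw [ht2] at e01
  have h01 : G 0 1 = 0 := by linear_combination -e01 - a2 * h21
  exact ⟨h10, h20, h01, h21⟩

theorem zeros_conj (g n : SL3)
    (h10 : (g : Matrix (Fin 3) (Fin 3) ℂ) 1 0 = 0) (h20 : (g : Matrix (Fin 3) (Fin 3) ℂ) 2 0 = 0)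
    (h01 : (g : Matrix (Fin 3) (Fin 3) ℂ) 0 1 = 0) (h21 : (g : Matrix (Fin 3) (Fin 3) ℂ) 2 1 = 0)
    (hn : n ∈ H) : g * n * g⁻¹ ∈ H := by
  rw [memH_iff H hH] at hn ⊢
  obtain ⟨n01, n10, n11, n20, n21⟩ := hn
  have hdet : (g : Matrix (Fin 3) (Fin 3) ℂ).det = 1 := g.2
  rw [Matrix.det_fin_three, h10, h20, h01, h21] at hdet
  ring_nf at hdet
  have hcoe : ((g * n * g⁻¹ : SL3) : Matrix (Fin 3) (Fin 3) ℂ)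
      = (g : Matrix (Fin 3) (Fin 3) ℂ) * (n : Matrix (Fin 3) (Fin 3) ℂ)
        * ((g : Matrix (Fin 3) (Fin 3) ℂ)).adjugate := by
    simp [Matrix.SpecialLinearGroup.coe_inv]
  rw [hcoe, Matrix.adjugate_fin_three]
  refine ⟨?_, ?_, ?_, ?_, ?_⟩ <;>
    · simp only [Matrix.mul_apply, Fin.sum_univ_three]
      norm_num [Matrix.vecHead, Matrix.vecTail, Matrix.cons_val_two, h10, h20, h01, h21, n01, n10, n11, n20, n21]
      try linear_combination hdet

theorem zeros_norm (g : SL3)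
    (h10 : (g : Matrix (Fin 3) (Fin 3) ℂ) 1 0 = 0) (h20 : (g : Matrix (Fin 3) (Fin 3) ℂ) 2 0 = 0)
    (h01 : (g : Matrix (Fin 3) (Fin 3) ℂ) 0 1 = 0) (h21 : (g : Matrix (Fin 3) (Fin 3) ℂ) 2 1 = 0) :
    g ∈ (Subgroup.normalizer (H : Set SL3)) := by
  have hinv : ((g⁻¹ : SL3) : Matrix (Fin 3) (Fin 3) ℂ) 1 0 = 0 ∧
      ((g⁻¹ : SL3) : Matrix (Fin 3) (Fin 3) ℂ) 2 0 = 0 ∧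
      ((g⁻¹ : SL3) : Matrix (Fin 3) (Fin 3) ℂ) 0 1 = 0 ∧
      ((g⁻¹ : SL3) : Matrix (Fin 3) (Fin 3) ℂ) 2 1 = 0 := by
    rw [Matrix.SpecialLinearGroup.coe_inv, Matrix.adjugate_fin_three]
    norm_num [Matrix.vecHead, Matrix.vecTail, Matrix.cons_val_two, h10, h20, h01, h21]
  obtain ⟨i10, i20, i01, i21⟩ := hinv
  rw [Subgroup.mem_normalizer_iff]
  intro n
  constructor
  · exact zeros_conj H hH g n h10 h20 h01 h21
  · intro hmem
    have h2 := zeros_conj H hH g⁻¹ (g * n * g⁻¹) i10 i20 i01 i21 hmem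
    have h3 : g⁻¹ * (g * n * g⁻¹) * (g⁻¹)⁻¹ = n := by group
    rwa [h3] at h2

/-- Characterization of the normalizer. -/
theorem memN_iff (g : SL3) :
    g ∈ (Subgroup.normalizer (H : Set SL3)) ↔
      ((g : Matrix (Fin 3) (Fin 3) ℂ) 1 0 = 0 ∧ (g : Matrix (Fin 3) (Fin 3) ℂ) 2 0 = 0 ∧
       (g : Matrix (Fin 3) (Fin 3) ℂ) 0 1 = 0 ∧ (g : Matrix (Fin 3) (Fin 3) ℂ) 2 1 = 0) :=
  ⟨norm_zeros H hH g, fun ⟨a, b, c, d⟩ => zeros_norm H hH g a b c d⟩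

end NormalizerCounterexample

open NormalizerCounterexample in
/-- For `G = SL₃(ℂ)` and the subgroup `H` of matrices `[[t,0,a],[0,1,b],[0,0,t⁻¹]]`
(with `t ∈ ℂˣ`, `a, b ∈ ℂ`), the normalizer of `H` in `G` is not self-normalizing:
`N_G(N_G(H)) ≠ N_G(H)`. -/
theorem normalizer_not_self_normalizing
    (H : Subgroup (Matrix.SpecialLinearGroup (Fin 3) ℂ))
    (hH : ∀ g : Matrix.SpecialLinearGroup (Fin 3) ℂ, g ∈ H ↔
      ∃ (t : ℂˣ) (a b : ℂ),
        (g : Matrix (Fin 3) (Fin 3) ℂ) = !![(t : ℂ), 0, a; 0, 1, b; 0, 0, (t : ℂ)⁻¹]) :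
    Subgroup.normalizer (Subgroup.normalizer (H : Set (Matrix.SpecialLinearGroup (Fin 3) ℂ)) :
      Set (Matrix.SpecialLinearGroup (Fin 3) ℂ)) ≠
      Subgroup.normalizer (H : Set (Matrix.SpecialLinearGroup (Fin 3) ℂ)) := by
  intro hEq
  set w : SL3 := ⟨!![0, 1, 0; -1, 0, 0; 0, 0, 1],
    by norm_num [Matrix.det_fin_three, Matrix.vecHead, Matrix.vecTail, Matrix.cons_val_two]⟩ with hw
  have hwcoe : (w : Matrix (Fin 3) (Fin 3) ℂ) = !![0, 1, 0; -1, 0, 0; 0, 0, 1] := rfl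
  have hwinv : ((w⁻¹ : SL3) : Matrix (Fin 3) (Fin 3) ℂ) = !![0, -1, 0; 1, 0, 0; 0, 0, 1] := by
    rw [Matrix.SpecialLinearGroup.coe_inv, hwcoe, Matrix.adjugate_fin_three]
    norm_num [Matrix.vecHead, Matrix.vecTail, Matrix.cons_val_two]
  have hwNN : w ∈ Subgroup.normalizer (Subgroup.normalizer (H : Set SL3) : Set SL3) := by
    rw [Subgroup.mem_normalizer_iff]
    intro n
    have hcoe : ((w * n * w⁻¹ : SL3) : Matrix (Fin 3) (Fin 3) ℂ)
        = (w : Matrix (Fin 3) (Fin 3) ℂ) * (n : Matrix (Fin 3) (Fin 3) ℂ)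
          * ((w⁻¹ : SL3) : Matrix (Fin 3) (Fin 3) ℂ) := by simp
    rw [memN_iff H hH, memN_iff H hH, hcoe, hwcoe, hwinv]
    constructor
    · rintro ⟨a, b, c, d⟩
      norm_num [Matrix.mul_apply, Matrix.vecMul, dotProduct, Fin.sum_univ_three,
        Matrix.vecHead, Matrix.vecTail, Matrix.cons_val_two, a, b, c, d]
    · intro hcond
      norm_num [Matrix.mul_apply, Matrix.vecMul, dotProduct, Fin.sum_univ_three,
        Matrix.vecHead, Matrix.vecTail, Matrix.cons_val_two] at hcond
      obtain ⟨a, b, c, d⟩ := hcond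
      refine ⟨?_, ?_, ?_, ?_⟩ <;> assumption
  rw [hEq] at hwNN
  have := (norm_zeros H hH w hwNN).1
  rw [hwcoe] at this
  norm_num [Matrix.vecHead, Matrix.vecTail, Matrix.cons_val_two] at this
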